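/- arXiv:1710.00287 — 2 statements merged into one kernel-verified Lean document; each statement's English description precedes it below -/
import Mathlib

section
/- Let V be a finite set, V' ⊆ V, with values s_i ∈ [0,1] and nonnegative integers c_i for i ∈ V' satisfying ∑_{i∈V'} c_i s_i ≥ t and ∑_{i∈V'} s_i ≤ k for an integer k. Then the sum of the k largest values c_i over i ∈ V' is at least t. -/
/-- Counting lemma: if ∑_{i∈V'} c_i s_i ≥ t and ∑_{i∈V'} s_i ≤ k with s_i ∈ [0,1],
then the sum of the k largest values c_i over V' is at least t. -/
theorem stmt_4 {V : Type*} [DecidableEq V]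
    (V' : Finset V) (s : V → ℝ) (c : V → ℕ)
    (hs : ∀ i ∈ V', 0 ≤ s i ∧ s i ≤ 1)
    (t : ℝ) (k : ℕ) (hk : 0 < k)
    (hcov : t ≤ ∑ i ∈ V', (c i : ℝ) * s i)
    (hsum : ∑ i ∈ V', s i ≤ (k : ℝ))
    (T : Finset V) (hT : T ⊆ V')
    (hcard : T.card = min k V'.card)
    (htop : ∀ i ∈ T, ∀ j ∈ V' \ T, c j ≤ c i) :
    t ≤ ∑ i ∈ T, (c i : ℝ) := by
  rcases le_or_gt V'.card k with hle | hlt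
  · -- T = V'
    have hTV : T = V' := Finset.eq_of_subset_of_card_le hT (by omega)
    subst hTV
    refine hcov.trans (Finset.sum_le_sum fun i hi => ?_)
    have h1 := (hs i hi).1
    have h2 := (hs i hi).2
    nlinarith [Nat.cast_nonneg (α := ℝ) (c i)]
  · have hcardk : T.card = k := by omega
    have hne : T.Nonempty := Finset.card_pos.mp (by omega)
    set m : ℝ := T.inf' hne (fun i => (c i : ℝ)) with hm
    have hmle : ∀ i ∈ T, m ≤ (c i : ℝ) := fun i hi => Finset.inf'_le _ hi
    have hmge : ∀ j ∈ V' \ T, (c j : ℝ) ≤ m := fun j hj =>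
      Finset.le_inf' hne _ fun i hi => Nat.cast_le.mpr (htop i hi j hj)
    have hm0 : 0 ≤ m := Finset.le_inf' hne _ fun i _ => Nat.cast_nonneg _
    have hsplit : ∀ f : V → ℝ,
        ∑ i ∈ V' \ T, f i + ∑ i ∈ T, f i = ∑ i ∈ V', f i :=
      fun f => Finset.sum_sdiff hT
    have h1 : ∑ j ∈ V' \ T, (c j : ℝ) * s j ≤ m * ∑ j ∈ V' \ T, s j := by
      rw [Finset.mul_sum]
      refine Finset.sum_le_sum fun j hj => ?_
      exact mul_le_mul_of_nonneg_right (hmge j hj)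
        (hs j (Finset.mem_sdiff.mp hj).1).1
    have h2 : ∑ j ∈ V' \ T, s j ≤ (k : ℝ) - ∑ i ∈ T, s i := by
      have := hsplit s; linarith
    have h3 : m * ((k : ℝ) - ∑ i ∈ T, s i) = ∑ i ∈ T, m * (1 - s i) := by
      have hk' : (k : ℝ) = ∑ _i ∈ T, (1 : ℝ) := by simp [hcardk]
      rw [hk', ← Finset.sum_sub_distrib, Finset.mul_sum]
    have h4 : ∑ i ∈ T, ((c i : ℝ) * s i + m * (1 - s i)) ≤ ∑ i ∈ T, (c i : ℝ) := by
      refine Finset.sum_le_sum fun i hi => ?_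
      have hs1 := (hs i (hT hi)).2
      have := hmle i hi
      nlinarith
    have hfin : ∑ i ∈ V', (c i : ℝ) * s i ≤ ∑ i ∈ T, (c i : ℝ) := by
      have hsp := hsplit (fun i => (c i : ℝ) * s i)
      have : m * ∑ j ∈ V' \ T, s j ≤ m * ((k : ℝ) - ∑ i ∈ T, s i) :=
        mul_le_mul_of_nonneg_left h2 hm0
      rw [Finset.sum_add_distrib] at h4
      linarith [h3 ▸ this]
    exact hcov.trans hfin
end

section
/- Let M be a matroid on V with rank function r, let F_1,...,F_m be pairwise disjoint subsets of V, let y ∈ [0,1]^V satisfy the matroid constraints y(U) ≤ r(U) for all U, y(F_j) ≤ 1 for all j, and suppose x_{ij} ≥ 0 satisfy x_{ij} ≤ y_i and the coverage bound ∑_j c_j s_j ≥ t where s_j = ∑_{i∈F_j} x_{ij} and c_j ≥ 1. Then the maximum of f(z) = ∑_j c_j z(F_j) over the integral polytope P' = {z ∈ [0,1]^V : z(U) ≤ r(U) ∀U, z(F_j) ≤ 1 ∀j} is at least t. -/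
/-- The maximum of f(z) = ∑_j c_j z(F_j) over the matroid-intersection polytope P'
is at least t, given a fractional solution achieving coverage t. -/
theorem stmt_16 {V : Type*} [Fintype V] [DecidableEq V]
    (r : Finset V → ℕ)
    (hr0 : r ∅ = 0)
    (hrcard : ∀ S : Finset V, r S ≤ S.card)
    (hrmono : ∀ S T : Finset V, S ⊆ T → r S ≤ r T)
    (hrsub : ∀ S T : Finset V, r (S ∪ T) + r (S ∩ T) ≤ r S + r T)
    (m : ℕ) (F : Fin m → Finset V)
    (hdisj : ∀ i j : Fin m, i ≠ j → Disjoint (F i) (F j))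
    (y : V → ℝ) (hy01 : ∀ i, 0 ≤ y i ∧ y i ≤ 1)
    (hyr : ∀ U : Finset V, ∑ v ∈ U, y v ≤ (r U : ℝ))
    (hyF : ∀ j : Fin m, ∑ v ∈ F j, y v ≤ 1)
    (x : V → Fin m → ℝ)
    (hx0 : ∀ i j, 0 ≤ x i j) (hxy : ∀ i j, x i j ≤ y i)
    (c : Fin m → ℝ) (hc : ∀ j, 1 ≤ c j)
    (s : Fin m → ℝ) (hs : ∀ j, s j = ∑ i ∈ F j, x i j)
    (t : ℝ) (ht : t ≤ ∑ j, c j * s j)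
    (P' : Set (V → ℝ))
    (hP' : P' = {z | (∀ i, 0 ≤ z i ∧ z i ≤ 1) ∧
        (∀ U : Finset V, ∑ v ∈ U, z v ≤ (r U : ℝ)) ∧
        ∀ j : Fin m, ∑ v ∈ F j, z v ≤ 1}) :
    ∃ z ∈ P', t ≤ ∑ j, c j * ∑ v ∈ F j, z v := by
  set z : V → ℝ := fun v => ∑ j, if v ∈ F j then x v j else 0 with hz
  have hzy : ∀ v, z v ≤ y v := by
    intro v
    by_cases h : ∃ j, v ∈ F j
    · obtain ⟨j₀, hj₀⟩ := h
      have : z v = x v j₀ := by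
        rw [hz]
        simp only
        rw [Finset.sum_eq_single j₀]
        · simp [hj₀]
        · intro j _ hne
          have : v ∉ F j := fun hv =>
            Finset.disjoint_left.mp (hdisj j j₀ hne) hv hj₀
          simp [this]
        · simp
      rw [this]; exact hxy v j₀
    · have : z v = 0 := by
        rw [hz]; simp only
        apply Finset.sum_eq_zero
        intro j _
        have : v ∉ F j := fun hv => h ⟨j, hv⟩
        simp [this]
      rw [this]; exact (hy01 v).1
  have hz0 : ∀ v, 0 ≤ z v := by
    intro v
    apply Finset.sum_nonneg
    intro j _
    split <;> [exact hx0 v j; rfl]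
  have hzF : ∀ j, ∑ v ∈ F j, z v = s j := by
    intro j
    rw [hs j]
    apply Finset.sum_congr rfl
    intro v hv
    rw [hz]; simp only
    rw [Finset.sum_eq_single j]
    · simp [hv]
    · intro j' _ hne
      have : v ∉ F j' := fun hv' =>
        Finset.disjoint_left.mp (hdisj j' j hne) hv' hv
      simp [this]
    · simp
  refine ⟨z, ?_, ?_⟩
  · rw [hP']
    refine ⟨fun v => ⟨hz0 v, (hzy v).trans (hy01 v).2⟩, ?_, ?_⟩
    · intro U
      exact (Finset.sum_le_sum fun v _ => hzy v).trans (hyr U)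
    · intro j
      exact (Finset.sum_le_sum fun v _ => hzy v).trans (hyF j)
  · calc t ≤ ∑ j, c j * s j := ht
      _ = ∑ j, c j * ∑ v ∈ F j, z v := by
          apply Finset.sum_congr rfl
          intro j _; rw [hzF j]
end
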